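/- For the signature σ = (+,-,-) and the rounding functions f^-(x) = x and any f^+ satisfying 0 ≤ f^+(x) ≤ 2x on [0,1], the inequality 2·LP^σ(x,y,z) ≥ ALG^σ(x,y,z) holds for all edge lengths x,y,z ∈ [0,1] satisfying the triangle inequality, where ALG^σ(x,y,z) = 2 - 2yz - 2f^+(x) + f^+(x)y + f^+(x)z and LP^σ(x,y,z) = 2 + x - y - z - xyz - f^+(x)y - f^+(x)z + 2f^+(x)yz. -/
import Mathlib


/-- For signature `σ = (+,-,-)` with `f⁻(t) = t` and any rounding function `f⁺` satisfying
`0 ≤ f⁺(t) ≤ 2t` on `[0,1]`, the inequality `2·LP^σ(x,y,z) ≥ ALG^σ(x,y,z)` holds for all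
edge lengths `x, y, z ∈ [0,1]` satisfying the triangle inequality, where
`ALG^σ(x,y,z) = 2 - 2yz - 2f⁺(x) + f⁺(x)y + f⁺(x)z` and
`LP^σ(x,y,z) = 2 + x - y - z - xyz - f⁺(x)y - f⁺(x)z + 2f⁺(x)yz`. -/
theorem alg_le_two_lp_pmm (fp : ℝ → ℝ)
    (hfp : ∀ t ∈ Set.Icc (0 : ℝ) 1, 0 ≤ fp t ∧ fp t ≤ 2 * t)
    (x y z : ℝ) (hx : x ∈ Set.Icc (0 : ℝ) 1) (hy : y ∈ Set.Icc (0 : ℝ) 1)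
    (hz : z ∈ Set.Icc (0 : ℝ) 1)
    (t1 : x ≤ y + z) (t2 : y ≤ x + z) (t3 : z ≤ x + y) :
    2 - 2*y*z - 2*(fp x) + (fp x)*y + (fp x)*z ≤
      2 * (2 + x - y - z - x*y*z - (fp x)*y - (fp x)*z + 2*(fp x)*y*z) := by
  obtain ⟨hf0, hf2⟩ := hfp x hx
  obtain ⟨hx0, hx1⟩ := hx
  obtain ⟨hy0, hy1⟩ := hy
  obtain ⟨hz0, hz1⟩ := hz
  nlinarith [mul_nonneg (sub_nonneg.2 hy1) (sub_nonneg.2 hz1),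
    mul_nonneg (mul_nonneg (sub_nonneg.2 hy1) (sub_nonneg.2 hz1)) hf0,
    mul_nonneg (mul_nonneg (sub_nonneg.2 hy1) (sub_nonneg.2 hz1)) (sub_nonneg.2 hf2),
    mul_nonneg hy0 hz0, mul_nonneg hx0 (mul_nonneg hy0 hz0),
    mul_nonneg hx0 (sub_nonneg.2 (mul_le_one₀ hy1 hz0 hz1))]
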